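/- Let t be an integer with t > 2, let R = ℤ[α] = ℤ[X]/(X² − tX + 1) with α the image of X, and let m, m' be integers with m·m' = t − 2 that are coprime (IsCoprime in ℤ). Then, as ideals of R, (m, α−1)² = (m), i.e. the square of the ideal generated by m and α−1 equals the principal ideal generated by m. In particular the class of (m, α−1) in the ideal class group has order dividing 2. -/

import Mathlib

open Polynomial

/-- The order `ℤ[α] = ℤ[X]/(X² − tX + 1)`. -/
def QuadOrd (t : ℤ) : Type :=
  AdjoinRoot ((X : ℤ[X]) ^ 2 - C t * X + 1)

noncomputable instance (t : ℤ) : CommRing (QuadOrd t) :=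
  inferInstanceAs (CommRing (AdjoinRoot _))

/-- The root `α`, i.e. the image of `X` in `ℤ[X]/(X² − tX + 1)`. -/
noncomputable def ordAlpha (t : ℤ) : QuadOrd t :=
  AdjoinRoot.root _

lemma ordAlpha_root (t : ℤ) : (ordAlpha t) ^ 2 = (t : QuadOrd t) * ordAlpha t - 1 := by
  have h := AdjoinRoot.eval₂_root ((X : ℤ[X]) ^ 2 - C t * X + 1)
  simp only [eval₂_add, eval₂_sub, eval₂_mul, eval₂_pow, eval₂_C, eval₂_X, eval₂_one] at h
  have hc : (AdjoinRoot.of ((X : ℤ[X]) ^ 2 - C t * X + 1)) t = (t : QuadOrd t) :=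
    map_intCast _ t
  rw [hc] at h
  have h' : ordAlpha t ^ 2 - (t : QuadOrd t) * ordAlpha t + 1 = 0 := h
  linear_combination h'

/-- for `t > 2` and coprime integers `m, m'` with `m·m' = t − 2`, one
has `(m, α−1)² = (m)` as ideals of `ℤ[α] = ℤ[X]/(X² − tX + 1)`; in particular the
class of `(m, α−1)` has order dividing 2 in the class group. -/
theorem ideal_square_principal (t : ℤ) (ht : 2 < t)
    (m m' : ℤ) (hmm : m * m' = t - 2) (hcop : IsCoprime m m') :
    Ideal.span ({(m : QuadOrd t), ordAlpha t - 1} : Set (QuadOrd t)) ^ 2 =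
      Ideal.span ({(m : QuadOrd t)} : Set (QuadOrd t)) := by
  set R := QuadOrd t
  set α : R := ordAlpha t with hαdef
  have hroot : α ^ 2 = (t : R) * α - 1 := ordAlpha_root t
  have hcast : (m : R) * (m' : R) = (t : R) - 2 := by
    have := congrArg (fun z : ℤ => (z : R)) hmm
    push_cast at this
    rw [Int.cast_mul] at this
    exact this
  have hsq : (α - 1) * (α - 1) = (m : R) * ((m' : R) * α) := by
    linear_combination hroot - α * hcast
  obtain ⟨a, b, hab⟩ := hcop
  have habR : (a : R) * m + (b : R) * m' = 1 := by
    have := congrArg (fun z : ℤ => (z : R)) hab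
    push_cast at this
    exact this
  rw [sq, Ideal.span_pair_mul_span_pair]
  apply le_antisymm
  · rw [Ideal.span_le]
    intro x hx
    simp only [Set.mem_insert_iff, Set.mem_singleton_iff] at hx
    simp only [SetLike.mem_coe, Ideal.mem_span_singleton]
    rcases hx with h | h | h | h <;> subst h
    · exact Dvd.intro _ rfl
    · exact dvd_mul_right _ _
    · exact dvd_mul_left _ _
    · exact ⟨_, hsq⟩
  · rw [Ideal.span_le, Set.singleton_subset_iff, SetLike.mem_coe]
    have key : (m : R) = (a : R) * ((m : R) * (m : R))
        + ((b : R) * ((t : R) - α)) * ((α - 1) * (α - 1)) := by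
      linear_combination (-(b : R) * ((t : R) - α)) * hsq
        + ((b : R) * (m : R) * (m' : R)) * hroot + (-(m : R)) * habR
    have h1 : (a : R) * ((m : R) * (m : R))
        + ((b : R) * ((t : R) - α)) * ((α - 1) * (α - 1)) ∈
        Ideal.span {(m : R) * (m : R), (m : R) * (α - 1), (α - 1) * (m : R),
          (α - 1) * (α - 1)} := by
      refine Ideal.add_mem _ (Ideal.mul_mem_left _ _ (Ideal.subset_span ?_))
        (Ideal.mul_mem_left _ _ (Ideal.subset_span ?_)) <;> simp
    rw [← key] at h1
    exact h1
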